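/- Let σ = {(j_1,j_{r+1}), (j_2,j_{r+2}), …, (j_r,j_{2r})} with j_1 < j_2 < … < j_{2r} be a set of r pairwise crossing diagonals of the convex n-gon. Then the monomial ∏_{k=1}^r x_{j_k, j_{k+r}} is, with respect to the reverse lexicographic term order refining the order x_{ij} ≺ x_{kl} whenever d_{ij} < d_{kl}, the maximal monomial among all monomials of the Pfaffian of the skew-symmetric submatrix A_{j_1,…,j_{2r}} (i.e., among all perfect matchings of {j_1,…,j_{2r}}). -/

import Mathlib

set_option maxHeartbeats 1600000
set_option linter.unusedSectionVars false


open MvPolynomial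

/-- Diagonals `(i,j)`, `1 ≤ i < j ≤ n`, of the convex `n`-gon; these index the variables
`x_{ij}` of the polynomial ring. -/
abbrev Diag (n : ℕ) := {p : Fin n × Fin n // p.1 < p.2}

/-- The cyclic distance `d_{ij} = min (j - i, n + i - j)` of a diagonal. -/
def dval (n : ℕ) (e : Diag n) : ℕ :=
  min ((e.1.2 : ℕ) - (e.1.1 : ℕ)) (n + (e.1.1 : ℕ) - (e.1.2 : ℕ))

/-- Reverse lexicographic comparison of two monomials (exponent vectors) with respect to a
linear order `vo` on the variables: `m` is smaller than `m'` iff at the `vo`-smallest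
variable where they differ, `m` has the strictly larger exponent. -/
def RevLexLT {σ : Type*} (vo : σ → σ → Prop) (m m' : σ →₀ ℕ) : Prop :=
  ∃ v, m' v < m v ∧ ∀ w, vo w v → m w = m' w

/-- The (degree) reverse lexicographic term order induced by `vo`: compare total degrees
first, then break ties by reverse lexicographic comparison. -/
def TermLT {σ : Type*} (vo : σ → σ → Prop) (m m' : σ →₀ ℕ) : Prop :=
  (m.sum fun _ e => e) < (m'.sum fun _ e => e) ∨
    ((m.sum fun _ e => e) = (m'.sum fun _ e => e) ∧ RevLexLT vo m m')

namespace Stmt11Aux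

variable {σ : Type*} (vo : σ → σ → Prop)

/-- total degree -/
def mdeg (m : σ →₀ ℕ) : ℕ := m.sum fun _ e => e

lemma mdeg_def (m : σ →₀ ℕ) : mdeg m = m.sum fun _ e => e := rfl

lemma mdeg_add (a b : σ →₀ ℕ) : mdeg (a + b) = mdeg a + mdeg b :=
  Finsupp.sum_add_index' (fun _ => rfl) (fun _ _ _ => rfl)

lemma mdeg_single (v : σ) (c : ℕ) : mdeg (Finsupp.single v c) = c := by
  simp [mdeg, Finsupp.sum_single_index]

lemma mdeg_finset_sum {ι : Type*} (s : Finset ι) (f : ι → (σ →₀ ℕ)) :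
    mdeg (∑ i ∈ s, f i) = ∑ i ∈ s, mdeg (f i) := by
  classical
  induction s using Finset.induction_on with
  | empty => simp [mdeg]
  | insert a s' hni ih =>
                     rw [Finset.sum_insert hni, Finset.sum_insert hni, mdeg_add, ih]

variable [hvo : IsStrictTotalOrder σ vo]

lemma exists_min_diff {m m' : σ →₀ ℕ} (h : m ≠ m') :
    ∃ v, m v ≠ m' v ∧ ∀ w, vo w v → m w = m' w := by
  classical
  letI : DecidableRel vo := Classical.decRel _
  letI : LinearOrder σ := linearOrderOfSTO vo
  set D : Finset σ := (m.support ∪ m'.support).filter (fun v => m v ≠ m' v) with hD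
  have hne : D.Nonempty := by
    obtain ⟨v, hv⟩ : ∃ v, m v ≠ m' v := by
      by_contra hc; push_neg at hc; exact h (Finsupp.ext hc)
    refine ⟨v, ?_⟩
    simp only [hD, Finset.mem_filter, Finset.mem_union, Finsupp.mem_support_iff]
    refine ⟨?_, hv⟩
    by_contra hc; push_neg at hc
    exact hv (by rw [hc.1, hc.2])
  refine ⟨D.min' hne, (Finset.mem_filter.1 (D.min'_mem hne)).2, ?_⟩
  intro w hw
  by_contra hc
  have hwD : w ∈ D := by
    simp only [hD, Finset.mem_filter, Finset.mem_union, Finsupp.mem_support_iff]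
    refine ⟨?_, hc⟩
    by_contra h2; push_neg at h2
    exact hc (by rw [h2.1, h2.2])
  exact absurd (D.min'_le w hwD) (not_le.2 hw)

lemma revlex_asymm {m m' : σ →₀ ℕ} (h : RevLexLT vo m m') (h' : RevLexLT vo m' m) : False := by
  obtain ⟨v1, h1, e1⟩ := h
  obtain ⟨v2, h2, e2⟩ := h'
  rcases trichotomous_of vo v1 v2 with hlt | rfl | hgt
  · have := e2 v1 hlt; omega
  · omega
  · have := e1 v2 hgt; omega

lemma revlex_trans {a b c : σ →₀ ℕ} (h : RevLexLT vo a b) (h' : RevLexLT vo b c) :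
    RevLexLT vo a c := by
  obtain ⟨v1, h1, e1⟩ := h
  obtain ⟨v2, h2, e2⟩ := h'
  rcases trichotomous_of vo v1 v2 with hlt | rfl | hgt
  · refine ⟨v1, ?_, ?_⟩
    · have := e2 v1 hlt; omega
    · intro w hw
      have hw2 : vo w v2 := hvo.trans _ _ _ hw hlt
      rw [e1 w hw, e2 w hw2]
  · exact ⟨v1, by omega, fun w hw => by rw [e1 w hw, e2 w hw]⟩
  · refine ⟨v2, ?_, ?_⟩
    · have := e1 v2 hgt; omega
    · intro w hw
      have hw1 : vo w v1 := hvo.trans _ _ _ hw hgt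
      rw [e1 w hw1, e2 w hw]

lemma termlt_STO : IsStrictTotalOrder (σ →₀ ℕ) (TermLT vo) where
  trichotomous a b := by
    suffices key : TermLT vo a b ∨ a = b ∨ TermLT vo b a by
      intro h1 h2; rcases key with h | h | h; exacts [absurd h h1, h, absurd h h2]
    rcases Nat.lt_trichotomy (a.sum fun _ e => e) (b.sum fun _ e => e) with h | h | h
    · exact Or.inl (Or.inl h)
    · by_cases hab : a = b
      · exact Or.inr (Or.inl hab)
      · obtain ⟨v, hv, hmin⟩ := exists_min_diff vo hab
        rcases Nat.lt_or_ge (a v) (b v) with h2 | h2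
        · refine Or.inr (Or.inr (Or.inr ⟨h.symm, v, h2, fun w hw => (hmin w hw).symm⟩))
        · exact Or.inl (Or.inr ⟨h, v, by omega, hmin⟩)
    · exact Or.inr (Or.inr (Or.inl h))
  irrefl a := by
    rintro (h | ⟨-, v, hv, -⟩)
    · exact lt_irrefl _ h
    · omega
  trans a b c := by
    rintro (h1 | ⟨h1, hr1⟩) (h2 | ⟨h2, hr2⟩)
    · exact Or.inl (h1.trans h2)
    · exact Or.inl (h2 ▸ h1)
    · exact Or.inl (h1 ▸ h2)
    · exact Or.inr ⟨h1.trans h2, revlex_trans vo hr1 hr2⟩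

lemma termlt_irrefl (a : σ →₀ ℕ) : ¬ TermLT vo a a := (termlt_STO vo).irrefl a

lemma termlt_add_right {a b : σ →₀ ℕ} (c : σ →₀ ℕ) (h : TermLT vo a b) :
    TermLT vo (a + c) (b + c) := by
  have hd : ∀ x y : σ →₀ ℕ, ((x + y).sum fun _ e => e) = (x.sum fun _ e => e) + (y.sum fun _ e => e) :=
    fun x y => mdeg_add x y
  rcases h with h | ⟨h, v, hv, hmin⟩
  · exact Or.inl (by rw [hd, hd]; omega)
  · refine Or.inr ⟨by rw [hd, hd, h], v, ?_, ?_⟩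
    · simp only [Finsupp.add_apply]; omega
    · intro w hw; simp only [Finsupp.add_apply, hmin w hw]

lemma termle_add {a b mp mq : σ →₀ ℕ} (ha : a = mp ∨ TermLT vo a mp)
    (hb : b = mq ∨ TermLT vo b mq) :
    a + b = mp + mq ∨ TermLT vo (a + b) (mp + mq) := by
  rcases ha with rfl | ha <;> rcases hb with rfl | hb
  · exact Or.inl rfl
  · refine Or.inr ?_
    have := termlt_add_right vo a hb
    rwa [add_comm b a, add_comm mq a] at this
  · exact Or.inr (termlt_add_right vo b ha)
  · refine Or.inr ?_
    have h1 : TermLT vo (a + b) (mp + b) := termlt_add_right vo b ha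
    have h2 : TermLT vo (mp + b) (mp + mq) := by
      have := termlt_add_right vo mp hb
      rwa [add_comm b mp, add_comm mq mp] at this
    exact (termlt_STO vo).trans _ _ _ h1 h2


variable {σ : Type*} (vo : σ → σ → Prop) [hvo : IsStrictTotalOrder σ vo]

lemma coeff_mul_of_max {R : Type*} [CommRing R] [DecidableEq σ] {p q : MvPolynomial σ R} {mp mq : σ →₀ ℕ}
    (hp : ∀ m ∈ p.support, m = mp ∨ TermLT vo m mp)
    (hq : ∀ m ∈ q.support, m = mq ∨ TermLT vo m mq) :
    coeff (mp + mq) (p * q) = coeff mp p * coeff mq q := by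
  rw [coeff_mul]
  refine Finset.sum_eq_single (mp, mq) ?_ ?_
  · rintro ⟨a, b⟩ hmem hne
    have hab : a + b = mp + mq := Finset.HasAntidiagonal.mem_antidiagonal.1 hmem
    by_cases hap : a ∈ p.support
    · by_cases hbq : b ∈ q.support
      · exfalso
        rcases hp a hap with rfl | h1
        · have : b = mq := by
            have := hab
            rwa [add_right_inj] at this
          exact hne (by rw [this])
        · have hlt1 : TermLT vo (a + b) (mp + b) := termlt_add_right vo b h1
          have hlt : TermLT vo (a + b) (mp + mq) := by
            rcases hq b hbq with rfl | h2
            · exact hlt1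
            · refine (termlt_STO vo).trans _ _ _ hlt1 ?_
              have := termlt_add_right vo mp h2
              rwa [add_comm b mp, add_comm mq mp] at this
          rw [hab] at hlt
          exact (termlt_STO vo).irrefl _ hlt
      · rw [notMem_support_iff.1 hbq, mul_zero]
    · rw [notMem_support_iff.1 hap, zero_mul]
  · intro h
    rw [Finset.HasAntidiagonal.mem_antidiagonal] at h
    exact absurd rfl h

lemma support_mul_of_max {R : Type*} [CommRing R] [DecidableEq σ] {p q : MvPolynomial σ R} {mp mq : σ →₀ ℕ}
    (hp : ∀ m ∈ p.support, m = mp ∨ TermLT vo m mp)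
    (hq : ∀ m ∈ q.support, m = mq ∨ TermLT vo m mq) :
    ∀ m ∈ (p * q).support, m = mp + mq ∨ TermLT vo m (mp + mq) := by
  classical
  intro m hm
  have := MvPolynomial.support_mul p q hm
  rw [Finset.mem_add] at this
  obtain ⟨a, ha, b, hb, rfl⟩ := this
  exact termle_add vo (hp a ha) (hq b hb)

lemma prod_X_eq_monomial {R : Type*} [CommSemiring R] {ι : Type*} (s : Finset ι) (f : ι → σ) :
    (∏ i ∈ s, (X (f i) : MvPolynomial σ R)) =
      monomial (∑ i ∈ s, Finsupp.single (f i) 1) 1 := by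
  classical
  induction s using Finset.induction_on with
  | empty => simp
  | insert a s' hni ih =>
      rw [Finset.prod_insert hni, Finset.sum_insert hni, ih]
      rw [X, monomial_mul, mul_one]

lemma countW {N : ℕ} (π : Equiv.Perm (Fin N)) (W : Finset (Fin N)) (a b : Fin N)
    (hdef : ¬(π a = b ∧ π b = a)) (hcard : Wᶜ.card + 1 < W.card) :
    ∃ i ∈ W, π i ∈ W ∧ ¬(i = a ∧ π i = b) ∧ ¬(i = b ∧ π i = a) := by
  classical
  by_contra hcon0
  have hcon : ∀ i ∈ W, π i ∈ W → (i = a ∧ π i = b) ∨ (i = b ∧ π i = a) := by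
    intro i hi hpi
    by_contra hc
    push_neg at hc
    exact hcon0 ⟨i, hi, hpi, fun h => (hc.1 h.1) h.2, fun h => (hc.2 h.1) h.2⟩
  set T := W.filter (fun i => π i ∈ W) with hT
  have hT1 : T.card ≤ 1 := by
    refine Finset.card_le_one.2 ?_
    intro x hx y hy
    rw [hT, Finset.mem_filter] at hx hy
    rcases hcon x hx.1 hx.2 with ⟨rfl, hxb⟩ | ⟨rfl, hxa⟩ <;>
      rcases hcon y hy.1 hy.2 with ⟨rfl, hyb⟩ | ⟨rfl, hya⟩
    · rfl
    · exact absurd ⟨hxb, hya⟩ hdef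
    · exact absurd ⟨hyb, hxa⟩ hdef
    · rfl
  set S := W.filter (fun i => π i ∉ W) with hS
  have hST : T.card + S.card = W.card := Finset.card_filter_add_card_filter_not _
  have himg : S.image π ⊆ Wᶜ := by
    intro y hy
    rw [Finset.mem_image] at hy
    obtain ⟨i, hi, rfl⟩ := hy
    rw [hS, Finset.mem_filter] at hi
    exact Finset.mem_compl.2 hi.2
  have hcard2 : S.card ≤ Wᶜ.card := by
    rw [← Finset.card_image_of_injective S π.injective]
    exact Finset.card_le_card himg
  omega

lemma keylem (n r : ℕ) (hr : 1 ≤ r) (j : Fin (r+r) → Fin n) (hj : StrictMono j)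
    (π : Equiv.Perm (Fin (r+r))) (hfp : ∀ i, π i ≠ i) (kk : Fin r)
    (hdef : ¬(π (Fin.castAdd r kk) = Fin.natAdd r kk ∧ π (Fin.natAdd r kk) = Fin.castAdd r kk)) :
    ∃ a b : Fin (r+r), a < b ∧ (π a = b ∨ π b = a) ∧
      (∀ l : Fin r, ¬(a = Fin.castAdd r l ∧ b = Fin.natAdd r l)) ∧
      min ((j b : ℕ) - (j a : ℕ)) (n + (j a : ℕ) - (j b : ℕ)) <
        min ((j (Fin.natAdd r kk) : ℕ) - (j (Fin.castAdd r kk) : ℕ))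
            (n + (j (Fin.castAdd r kk) : ℕ) - (j (Fin.natAdd r kk) : ℕ)) := by
  classical
  set a0 := Fin.castAdd r kk with ha0
  set b0 := Fin.natAdd r kk with hb0
  have hva0 : (a0 : ℕ) = kk := rfl
  have hvb0 : (b0 : ℕ) = r + kk := rfl
  have hkk : (kk : ℕ) < r := kk.isLt
  have hab0 : a0 < b0 := by
    rw [Fin.lt_def, hva0, hvb0]; omega
  have hJab0 : (j a0 : ℕ) < (j b0 : ℕ) := hj hab0
  have hJb0n : (j b0 : ℕ) < n := (j b0).isLt
  -- helper to produce the result from a window element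
  have main : ∀ (i : Fin (r+r)), i ∈ Set.univ → π i ∈ Set.univ →
      True → True → True := by intro _ _ _ _ _; trivial
  by_cases hU : (j b0 : ℕ) - (j a0 : ℕ) ≤ n + (j a0 : ℕ) - (j b0 : ℕ)
  · -- short arc is the "inside" arc
    set W : Finset (Fin (r+r)) := Finset.Icc a0 b0 with hW
    have hcardW : W.card = r + 1 := by
      rw [hW, Fin.card_Icc, hva0, hvb0]; omega
    have hcardWc : Wᶜ.card + 1 < W.card := by
      rw [Finset.card_compl, hcardW]
      simp only [Fintype.card_fin]
      omega
    obtain ⟨i, hiW, hpiW, h1, h2⟩ := countW π W a0 b0 hdef hcardWc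
    have hne : i ≠ π i := fun h => hfp i h.symm
    refine ⟨min i (π i), max i (π i), min_lt_max.2 hne, ?_, ?_, ?_⟩
    · rcases lt_or_gt_of_ne hne with h | h
      · rw [min_eq_left h.le, max_eq_right h.le]; exact Or.inl rfl
      · rw [min_eq_right h.le, max_eq_left h.le]; exact Or.inr rfl
    · intro l ⟨hal, hbl⟩
      have hminW : min i (π i) ∈ W := by
        rcases min_choice i (π i) with h | h <;> rw [h] <;> assumption
      have hmaxW : max i (π i) ∈ W := by
        rcases max_choice i (π i) with h | h <;> rw [h] <;> assumption
      rw [hal] at hminW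
      rw [hbl] at hmaxW
      rw [hW, Finset.mem_Icc] at hminW hmaxW
      have h3 : (kk : ℕ) ≤ l := by
        have := hminW.1; rw [Fin.le_def] at this; simpa [hva0] using this
      have h4 : (l : ℕ) ≤ kk := by
        have := hmaxW.2; rw [Fin.le_def] at this
        simp only [Fin.coe_natAdd, hvb0] at this; omega
      have hlkk : l = kk := Fin.ext (le_antisymm h4 h3)
      subst hlkk
      rw [← ha0] at hal
      rw [← hb0] at hbl
      rcases lt_or_gt_of_ne hne with h | h
      · rw [min_eq_left h.le] at hal
        rw [max_eq_right h.le] at hbl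
        exact h1 ⟨hal, hbl⟩
      · rw [min_eq_right h.le] at hal
        rw [max_eq_left h.le] at hbl
        exact h2 ⟨hbl, hal⟩
    · -- distance inequality
      set a := min i (π i)
      set b := max i (π i)
      have hab : a < b := min_lt_max.2 hne
      have haW : a ∈ W := by
        rcases min_choice i (π i) with h | h <;> rw [show a = _ from h] <;> assumption
      have hbW : b ∈ W := by
        rcases max_choice i (π i) with h | h <;> rw [show b = _ from h] <;> assumption
      rw [hW, Finset.mem_Icc] at haW hbW
      have hJa : (j a0 : ℕ) ≤ (j a : ℕ) := hj.monotone haW.1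
      have hJb : (j b : ℕ) ≤ (j b0 : ℕ) := hj.monotone hbW.2
      have hJab : (j a : ℕ) < (j b : ℕ) := hj hab
      have hstrict : (j a0 : ℕ) < (j a : ℕ) ∨ (j b : ℕ) < (j b0 : ℕ) := by
        by_contra hcon
        push_neg at hcon
        have hja : j a = j a0 := Fin.ext (le_antisymm (by omega) (by omega))
        have hjb : j b = j b0 := Fin.ext (le_antisymm hJb (by omega))
        have haa : a = a0 := hj.injective hja
        have hbb : b = b0 := hj.injective hjb
        -- contradict h1, h2 as before
        rcases lt_or_gt_of_ne hne with h | h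
        · exact h1 ⟨by rw [← haa]; exact (min_eq_left h.le).symm ▸ rfl,
            by rw [← hbb]; exact (max_eq_right h.le).symm ▸ rfl⟩
        · exact h2 ⟨by rw [← hbb]; exact (max_eq_left h.le).symm ▸ rfl,
            by rw [← haa]; exact (min_eq_right h.le).symm ▸ rfl⟩
      have hL := Nat.min_le_left ((j b : ℕ) - (j a : ℕ)) (n + (j a : ℕ) - (j b : ℕ))
      rw [Nat.min_eq_left hU]
      omega
  · -- long arc case
    push_neg at hU
    set W : Finset (Fin (r+r)) := Finset.Iic a0 ∪ Finset.Ici b0 with hW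
    have hdisj : Disjoint (Finset.Iic a0) (Finset.Ici b0) := by
      rw [Finset.disjoint_left]
      intro x hx hx2
      rw [Finset.mem_Iic] at hx
      rw [Finset.mem_Ici] at hx2
      exact absurd (hx2.trans hx) (not_le.2 hab0)
    have hcardW : W.card = r + 1 := by
      rw [hW, Finset.card_union_of_disjoint hdisj, Fin.card_Iic, Fin.card_Ici, hva0, hvb0]
      omega
    have hcardWc : Wᶜ.card + 1 < W.card := by
      rw [Finset.card_compl, hcardW]
      simp only [Fintype.card_fin]
      omega
    obtain ⟨i, hiW, hpiW, h1, h2⟩ := countW π W a0 b0 hdef hcardWc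
    have hne : i ≠ π i := fun h => hfp i h.symm
    have hmemW : ∀ x : Fin (r+r), x ∈ W → (x ≤ a0 ∨ b0 ≤ x) := by
      intro x hx
      rw [hW, Finset.mem_union, Finset.mem_Iic, Finset.mem_Ici] at hx
      exact hx
    refine ⟨min i (π i), max i (π i), min_lt_max.2 hne, ?_, ?_, ?_⟩
    · rcases lt_or_gt_of_ne hne with h | h
      · rw [min_eq_left h.le, max_eq_right h.le]; exact Or.inl rfl
      · rw [min_eq_right h.le, max_eq_left h.le]; exact Or.inr rfl
    · intro l ⟨hal, hbl⟩
      have hminW : min i (π i) ∈ W := by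
        rcases min_choice i (π i) with h | h <;> rw [h] <;> assumption
      have hmaxW : max i (π i) ∈ W := by
        rcases max_choice i (π i) with h | h <;> rw [h] <;> assumption
      rw [hal] at hminW
      rw [hbl] at hmaxW
      have h3 := hmemW _ hminW
      have h4 := hmemW _ hmaxW
      have h3' : (l : ℕ) ≤ kk := by
        rcases h3 with h | h
        · rw [Fin.le_def] at h; simpa [hva0] using h
        · rw [Fin.le_def] at h
          simp only [Fin.coe_natAdd, Fin.coe_castAdd, hvb0] at h
          omega
      have h4' : (kk : ℕ) ≤ l := by
        rcases h4 with h | h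
        · rw [Fin.le_def] at h
          simp only [Fin.coe_natAdd, Fin.coe_castAdd, hva0] at h
          omega
        · rw [Fin.le_def] at h
          simp only [Fin.coe_natAdd, hvb0] at h
          omega
      have hlkk : l = kk := Fin.ext (le_antisymm h3' h4')
      subst hlkk
      rw [← ha0] at hal
      rw [← hb0] at hbl
      rcases lt_or_gt_of_ne hne with h | h
      · rw [min_eq_left h.le] at hal
        rw [max_eq_right h.le] at hbl
        exact h1 ⟨hal, hbl⟩
      · rw [min_eq_right h.le] at hal
        rw [max_eq_left h.le] at hbl
        exact h2 ⟨hbl, hal⟩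
    · set a := min i (π i) with hadef
      set b := max i (π i) with hbdef
      have hab : a < b := min_lt_max.2 hne
      have haW : a ∈ W := by
        rcases min_choice i (π i) with h | h <;> rw [show a = _ from h] <;> assumption
      have hbW : b ∈ W := by
        rcases max_choice i (π i) with h | h <;> rw [show b = _ from h] <;> assumption
      have hJab : (j a : ℕ) < (j b : ℕ) := hj hab
      have hJbn : (j b : ℕ) < n := (j b).isLt
      have hL1 := Nat.min_le_left ((j b : ℕ) - (j a : ℕ)) (n + (j a : ℕ) - (j b : ℕ))
      have hL2 := Nat.min_le_right ((j b : ℕ) - (j a : ℕ)) (n + (j a : ℕ) - (j b : ℕ))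
      rw [Nat.min_eq_right hU.le]
      rcases hmemW a haW with ha | ha
      · rcases hmemW b hbW with hb | hb
        · -- both low
          have hJb : (j b : ℕ) ≤ (j a0 : ℕ) := hj.monotone hb
          omega
        · -- a low, b high
          have hJa : (j a : ℕ) ≤ (j a0 : ℕ) := hj.monotone ha
          have hJb : (j b0 : ℕ) ≤ (j b : ℕ) := hj.monotone hb
          have hstrict : (j a : ℕ) < (j a0 : ℕ) ∨ (j b0 : ℕ) < (j b : ℕ) := by
            by_contra hcon
            push_neg at hcon
            have hja : j a = j a0 := Fin.ext (le_antisymm hJa hcon.1)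
            have hjb : j b = j b0 := Fin.ext (le_antisymm hcon.2 hJb)
            have haa : a = a0 := hj.injective hja
            have hbb : b = b0 := hj.injective hjb
            rcases lt_or_gt_of_ne hne with h | h
            · refine h1 ⟨?_, ?_⟩
              · rw [← haa, hadef, min_eq_left h.le]
              · rw [← hbb, hbdef, max_eq_right h.le]
            · refine h2 ⟨?_, ?_⟩
              · rw [← hbb, hbdef, max_eq_left h.le]
              · rw [← haa, hadef, min_eq_right h.le]
          omega
      · -- both high (since a < b, b is also ≥ b0)
        have hJa : (j b0 : ℕ) ≤ (j a : ℕ) := hj.monotone ha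
        omega
end Stmt11Aux

open Stmt11Aux in
/-- Let `σ = {(j_1,j_{r+1}), …, (j_r,j_{2r})}` with `j_1 < … < j_{2r}` be a set of `r`
pairwise crossing diagonals of the convex `n`-gon.  Then `∏_{k=1}^r x_{j_k j_{k+r}}` is,
with respect to any reverse lexicographic term order refining `x_{ij} ≺ x_{kl}` whenever
`d_{ij} < d_{kl}`, the maximal monomial among all monomials of the Pfaffian of the
skew-symmetric submatrix `A_{j_1,…,j_{2r}}`. -/
theorem stmt11 (k : Type) [Field k] (n r : ℕ) (hr : 1 ≤ r)
    (vo : Diag n → Diag n → Prop) (hvo : IsStrictTotalOrder (Diag n) vo)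
    (hcompat : ∀ e f : Diag n, dval n e < dval n f → vo e f)
    (A : Matrix (Fin n) (Fin n) (MvPolynomial (Diag n) k))
    (hA : ∀ i j : Fin n, A i j =
      if h : i < j then X ⟨(i, j), h⟩
      else if h' : j < i then - X ⟨(j, i), h'⟩
      else 0)
    (j : Fin (r + r) → Fin n) (hj : StrictMono j)
    (e : Fin r → Diag n)
    (he : ∀ kk : Fin r, (e kk).1 = (j (Fin.castAdd r kk), j (Fin.natAdd r kk)))
    (p : MvPolynomial (Diag n) k) (hp : p ^ 2 = (A.submatrix j j).det)
    (mσ : Diag n →₀ ℕ) (hmσ : mσ = ∑ kk : Fin r, Finsupp.single (e kk) 1) :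
    mσ ∈ p.support ∧ ∀ m ∈ p.support, m ≠ mσ → TermLT vo m mσ := by
  classical
  haveI := hvo
  -- basic facts
  have hcn : ∀ kk : Fin r, Fin.castAdd r kk < Fin.natAdd r kk := by
    intro kk
    rw [Fin.lt_def]
    simp only [Fin.coe_castAdd, Fin.coe_natAdd]
    omega
  have einj : Function.Injective e := by
    intro x y hxy
    have h1 := congrArg (fun d : Diag n => d.1.1) hxy
    simp only [he] at h1
    have := hj.injective h1
    exact Fin.ext (by simpa [Fin.ext_iff] using this)
  have hmσe : ∀ kk : Fin r, mσ (e kk) = 1 := by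
    intro kk
    rw [hmσ, Finsupp.finset_sum_apply]
    rw [Finset.sum_eq_single kk]
    · rw [Finsupp.single_apply, if_pos rfl]
    · intro l _ hl
      rw [Finsupp.single_apply, if_neg (fun hEq => hl (einj hEq))]
    · intro h; exact absurd (Finset.mem_univ kk) h
  have hmσ0 : ∀ t : Diag n, (∀ l, t ≠ e l) → mσ t = 0 := by
    intro t ht
    rw [hmσ, Finsupp.finset_sum_apply]
    refine Finset.sum_eq_zero (fun l _ => ?_)
    rw [Finsupp.single_apply, if_neg (fun hEq => ht l hEq.symm)]
  -- the involution τ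
  have hinvol : Function.Involutive (fun i : Fin (r+r) =>
      if h : (i : ℕ) < r then (⟨(i : ℕ) + r, by omega⟩ : Fin (r+r))
      else ⟨(i : ℕ) - r, by omega⟩) := by
    intro i
    dsimp only
    by_cases h : (i : ℕ) < r
    · rw [dif_pos h]
      rw [dif_neg (by simp)]
      exact Fin.ext (by simp)
    · rw [dif_neg h]
      rw [dif_pos (by simp; omega)]
      exact Fin.ext (by simp; omega)
  set τ : Equiv.Perm (Fin (r+r)) := Function.Involutive.toPerm _ hinvol with hτdef
  have hτ_apply : ∀ i : Fin (r+r), τ i =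
      if h : (i : ℕ) < r then (⟨(i : ℕ) + r, by omega⟩ : Fin (r+r))
      else ⟨(i : ℕ) - r, by omega⟩ := fun i => rfl
  have hτ_cast : ∀ kk : Fin r, τ (Fin.castAdd r kk) = Fin.natAdd r kk := by
    intro kk
    rw [hτ_apply, dif_pos (by simp)]
    refine Fin.ext ?_
    simp only [Fin.coe_natAdd, Fin.coe_castAdd]
    omega
  have hτ_nat : ∀ kk : Fin r, τ (Fin.natAdd r kk) = Fin.castAdd r kk := by
    intro kk
    rw [hτ_apply, dif_neg (by simp)]
    exact Fin.ext (by simp)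
  have hτfp : ∀ i : Fin (r+r), τ i ≠ i := by
    intro i hEq
    rw [hτ_apply] at hEq
    have := congrArg Fin.val hEq
    by_cases h : (i : ℕ) < r
    · rw [dif_pos h] at this; simp at this; omega
    · rw [dif_neg h] at this
      simp at this
      omega
  -- the chord function
  set vd : Fin (r+r) → Fin (r+r) → Diag n := fun i i' =>
    if h : i < i' then ⟨(j i, j i'), hj h⟩
    else if h' : i' < i then ⟨(j i', j i), hj h'⟩ else e ⟨0, hr⟩ with hvddef
  have hvd1 : ∀ i i' : Fin (r+r), i < i' → (vd i i').1 = (j i, j i') := by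
    intro i i' h
    rw [hvddef]
    simp only [dif_pos h]
  have hvd2 : ∀ i i' : Fin (r+r), i' < i → (vd i i').1 = (j i', j i) := by
    intro i i' h
    rw [hvddef]
    simp only [dif_neg (asymm h), dif_pos h]
  -- monomial and sign of a permutation
  set mOf : Equiv.Perm (Fin (r+r)) → (Diag n →₀ ℕ) :=
    fun π => ∑ i : Fin (r+r), Finsupp.single (vd i (π i)) 1 with hmOfdef
  set sOf : Equiv.Perm (Fin (r+r)) → k :=
    fun π => ∏ i : Fin (r+r), (if i < π i then (-1 : k) else 1) with hsOfdef
  have hsOf_ne : ∀ π, sOf π ≠ 0 := by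
    intro π h0
    have hsq : sOf π * sOf π = 1 := by
      rw [hsOfdef]
      dsimp only
      rw [← Finset.prod_mul_distrib]
      refine Finset.prod_eq_one (fun i _ => ?_)
      split_ifs <;> ring
    rw [h0, mul_zero] at hsq
    exact zero_ne_one hsq
  -- entries of the submatrix
  have hentry : ∀ i i' : Fin (r+r), i ≠ i' →
      (A.submatrix j j) i' i = C (if i < i' then (-1 : k) else 1) * X (vd i i') := by
    intro i i' hne
    rcases lt_or_gt_of_ne hne with h | h
    · have hj2 : j i < j i' := hj h
      rw [Matrix.submatrix_apply, hA, dif_neg (not_lt.2 hj2.le), dif_pos hj2, if_pos h]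
      rw [show (⟨(j i, j i'), hj2⟩ : Diag n) = vd i i' from Subtype.ext (hvd1 i i' h).symm]
      rw [map_neg, map_one, neg_one_mul]
    · have hj2 : j i' < j i := hj h
      rw [Matrix.submatrix_apply, hA, dif_pos hj2, if_neg (asymm h)]
      rw [show (⟨(j i', j i), hj2⟩ : Diag n) = vd i i' from Subtype.ext (hvd2 i i' h).symm]
      rw [map_one, one_mul]
  have hzero : ∀ π : Equiv.Perm (Fin (r+r)), (∃ i, π i = i) →
      (∏ i : Fin (r+r), (A.submatrix j j) (π i) i) = 0 := by
    rintro π ⟨i0, hi0⟩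
    refine Finset.prod_eq_zero (Finset.mem_univ i0) ?_
    rw [hi0, Matrix.submatrix_apply, hA, dif_neg (lt_irrefl _), dif_neg (lt_irrefl _)]
  have hprod : ∀ π : Equiv.Perm (Fin (r+r)), (∀ i, π i ≠ i) →
      (∏ i : Fin (r+r), (A.submatrix j j) (π i) i) = C (sOf π) * monomial (mOf π) 1 := by
    intro π hfp
    have hstep : ∀ i : Fin (r+r),
        (A.submatrix j j) (π i) i = C (if i < π i then (-1 : k) else 1) * X (vd i (π i)) :=
      fun i => hentry i (π i) (fun h => hfp i h.symm)
    calc (∏ i : Fin (r+r), (A.submatrix j j) (π i) i)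
        = ∏ i : Fin (r+r), (C (if i < π i then (-1 : k) else 1) * X (vd i (π i))) :=
          Finset.prod_congr rfl (fun i _ => hstep i)
      _ = (∏ i : Fin (r+r), C (if i < π i then (-1 : k) else 1)) *
            ∏ i : Fin (r+r), X (vd i (π i)) := Finset.prod_mul_distrib
      _ = C (sOf π) * monomial (mOf π) 1 := by
          rw [← map_prod, prod_X_eq_monomial]
  -- characterisation of chords equal to a crossing diagonal
  have hvchar : ∀ i i' : Fin (r+r), i ≠ i' → ∀ kk : Fin r,
      (vd i i' = e kk ↔
        ((i = Fin.castAdd r kk ∧ i' = Fin.natAdd r kk) ∨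
         (i = Fin.natAdd r kk ∧ i' = Fin.castAdd r kk))) := by
    intro i i' hne kk
    constructor
    · intro hv
      have hv1 := congrArg (fun d : Diag n => d.1) hv
      simp only [he kk] at hv1
      rcases lt_or_gt_of_ne hne with h | h
      · rw [hvd1 i i' h] at hv1
        obtain ⟨h1, h2⟩ := Prod.ext_iff.1 hv1
        exact Or.inl ⟨hj.injective h1, hj.injective h2⟩
      · rw [hvd2 i i' h] at hv1
        obtain ⟨h1, h2⟩ := Prod.ext_iff.1 hv1
        exact Or.inr ⟨hj.injective h2, hj.injective h1⟩
    · rintro (⟨rfl, rfl⟩ | ⟨rfl, rfl⟩)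
      · exact Subtype.ext (by rw [hvd1 _ _ (hcn kk), he kk])
      · exact Subtype.ext (by rw [hvd2 _ _ (hcn kk), he kk])
  -- value of mOf at a crossing diagonal
  have happly : ∀ (π : Equiv.Perm (Fin (r+r))), (∀ i, π i ≠ i) → ∀ kk : Fin r,
      mOf π (e kk) = (if π (Fin.castAdd r kk) = Fin.natAdd r kk then 1 else 0) +
        (if π (Fin.natAdd r kk) = Fin.castAdd r kk then 1 else 0) := by
    intro π hfp kk
    rw [hmOfdef]
    dsimp only
    rw [Finsupp.finset_sum_apply]
    have hterm : ∀ i : Fin (r+r),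
        (Finsupp.single (vd i (π i)) (1:ℕ)) (e kk) = if vd i (π i) = e kk then 1 else 0 :=
      fun i => Finsupp.single_apply
    rw [Finset.sum_congr rfl (fun i _ => hterm i)]
    rw [← Finset.sum_subset
      (Finset.subset_univ ({Fin.castAdd r kk, Fin.natAdd r kk} : Finset (Fin (r+r)))) ?_]
    · rw [Finset.sum_pair (hcn kk).ne]
      congr 1
      · refine if_congr ?_ rfl rfl
        rw [hvchar _ _ (fun h => hfp _ h.symm) kk]
        constructor
        · rintro (⟨-, h⟩ | ⟨h, -⟩)
          · exact h
          · exact absurd h (hcn kk).ne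
        · intro h; exact Or.inl ⟨rfl, h⟩
      · refine if_congr ?_ rfl rfl
        rw [hvchar _ _ (fun h => hfp _ h.symm) kk]
        constructor
        · rintro (⟨h, -⟩ | ⟨-, h⟩)
          · exact absurd h (hcn kk).ne'
          · exact h
        · intro h; exact Or.inr ⟨rfl, h⟩
    · intro i _ hni
      rw [if_neg]
      intro hEq
      rw [hvchar _ _ (fun h => hfp _ h.symm) kk] at hEq
      rcases hEq with ⟨h1, -⟩ | ⟨h1, -⟩ <;>
        simp [h1, Finset.mem_insert] at hni
  -- mOf τ is the doubled crossing monomial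
  have hτm : mOf τ = mσ + mσ := by
    rw [hmOfdef, hmσ]
    dsimp only
    rw [Fin.sum_univ_add]
    congr 1
    · refine Finset.sum_congr rfl (fun kk _ => ?_)
      congr 1
      refine Subtype.ext ?_
      rw [hτ_cast kk, hvd1 _ _ (hcn kk), he kk]
    · refine Finset.sum_congr rfl (fun kk _ => ?_)
      congr 1
      refine Subtype.ext ?_
      rw [hτ_nat kk, hvd2 _ _ (hcn kk), he kk]
  -- uniqueness
  have huniq : ∀ π : Equiv.Perm (Fin (r+r)), (∀ i, π i ≠ i) → mOf π = mσ + mσ → π = τ := by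
    intro π hfp hEq
    have hall : ∀ kk : Fin r,
        π (Fin.castAdd r kk) = Fin.natAdd r kk ∧ π (Fin.natAdd r kk) = Fin.castAdd r kk := by
      intro kk
      have h2 : (mσ + mσ) (e kk) = 2 := by
        rw [Finsupp.add_apply, hmσe kk]
      have h3 := happly π hfp kk
      rw [hEq, h2] at h3
      split_ifs at h3 with ha hb hb
      · exact ⟨ha, hb⟩
      · omega
      · omega
      · omega
    apply Equiv.ext
    intro i
    by_cases h : (i : ℕ) < r
    · have hi : i = Fin.castAdd r ⟨(i : ℕ), h⟩ := Fin.ext rfl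
      rw [hi, (hall ⟨(i : ℕ), h⟩).1, hτ_cast]
    · have hi : i = Fin.natAdd r ⟨(i : ℕ) - r, by omega⟩ := Fin.ext (by simp; omega)
      rw [hi, (hall ⟨(i : ℕ) - r, by omega⟩).2, hτ_nat]
  -- the doubled crossing monomial is in the support of the determinant
  have hdetcoeff : coeff (mσ + mσ) ((A.submatrix j j).det) ≠ 0 := by
    rw [Matrix.det_apply, MvPolynomial.coeff_sum]
    rw [Finset.sum_eq_single τ ?_ ?_]
    · rw [hprod τ hτfp, C_mul_monomial, mul_one, Units.smul_def, coeff_smul,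
        coeff_monomial, if_pos hτm]
      rcases Int.units_eq_one_or (Equiv.Perm.sign τ) with hs | hs <;> rw [hs]
      · simpa using hsOf_ne τ
      · simpa using hsOf_ne τ
    · intro π _ hπτ
      by_cases hfp : ∀ i, π i ≠ i
      · rw [hprod π hfp, C_mul_monomial, mul_one, Units.smul_def, coeff_smul,
          coeff_monomial, if_neg (fun hEq => hπτ (huniq π hfp hEq)), smul_zero]
      · push_neg at hfp
        rw [hzero π hfp, smul_zero, coeff_zero]
    · intro h; exact absurd (Finset.mem_univ τ) h
  -- maximality in the support of the determinant
  have hdetmax : ∀ m ∈ ((A.submatrix j j).det).support,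
      m = mσ + mσ ∨ TermLT vo m (mσ + mσ) := by
    intro m hm
    have hcm : coeff m ((A.submatrix j j).det) ≠ 0 := mem_support_iff.1 hm
    rw [Matrix.det_apply, MvPolynomial.coeff_sum] at hcm
    obtain ⟨π, -, hπ⟩ := Finset.exists_ne_zero_of_sum_ne_zero hcm
    by_cases hfp : ∀ i, π i ≠ i
    swap
    · push_neg at hfp
      rw [hzero π hfp, smul_zero, coeff_zero] at hπ
      exact absurd rfl hπ
    rw [hprod π hfp, C_mul_monomial, mul_one, Units.smul_def, coeff_smul,
      coeff_monomial] at hπ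
    have hmm : mOf π = m := by
      by_contra hc
      rw [if_neg hc, smul_zero] at hπ
      exact hπ rfl
    subst hmm
    by_cases heq : mOf π = mσ + mσ
    · exact Or.inl heq
    refine Or.inr ?_
    have hdeg : ((mOf π).sum fun _ c => c) = ((mσ + mσ).sum fun _ c => c) := by
      have h1 : mdeg (mOf π) = r + r := by
        rw [hmOfdef]
        dsimp only
        rw [mdeg_finset_sum]
        simp [mdeg_single]
      have h2 : mdeg (mσ + mσ) = r + r := by
        rw [mdeg_add, hmσ, mdeg_finset_sum]
        simp [mdeg_single]
      have := h1.trans h2.symm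
      exact this
    refine Or.inr ⟨hdeg, ?_⟩
    obtain ⟨v0, hv0ne, hv0min⟩ := exists_min_diff vo heq
    refine ⟨v0, ?_, fun w hw => hv0min w hw⟩
    by_contra hcon
    push_neg at hcon
    have hlt : mOf π v0 < (mσ + mσ) v0 := lt_of_le_of_ne hcon hv0ne
    have hσpos : mσ v0 ≠ 0 := by
      rw [Finsupp.add_apply] at hlt
      omega
    have hkk : ∃ kk : Fin r, v0 = e kk := by
      by_contra hc
      push_neg at hc
      exact hσpos (hmσ0 v0 (fun l h => hc l h))
    obtain ⟨kk, rfl⟩ := hkk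
    have hM2v : (mσ + mσ) (e kk) = 2 := by rw [Finsupp.add_apply, hmσe kk]
    have hlt2 : mOf π (e kk) < 2 := by omega
    have hdef : ¬(π (Fin.castAdd r kk) = Fin.natAdd r kk ∧
        π (Fin.natAdd r kk) = Fin.castAdd r kk) := by
      rintro ⟨hh1, hh2⟩
      rw [happly π hfp kk, if_pos hh1, if_pos hh2] at hlt2
      omega
    obtain ⟨a, b, hab, hπab, hnc, hdist⟩ := keylem n r hr j hj π hfp kk hdef
    set t : Diag n := ⟨(j a, j b), hj hab⟩ with htdef
    have hvd_t : ∃ i0 : Fin (r+r), vd i0 (π i0) = t := by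
      rcases hπab with h | h
      · exact ⟨a, Subtype.ext (by rw [h, hvd1 a b hab])⟩
      · exact ⟨b, Subtype.ext (by rw [h, hvd2 b a hab])⟩
    obtain ⟨i0, hi0⟩ := hvd_t
    have hmt : 1 ≤ mOf π t := by
      rw [hmOfdef]
      dsimp only
      rw [Finsupp.finset_sum_apply]
      calc (1 : ℕ) = (Finsupp.single (vd i0 (π i0)) 1) t := by
            rw [hi0, Finsupp.single_apply, if_pos rfl]
        _ ≤ _ := Finset.single_le_sum
            (f := fun i : Fin (r+r) => (Finsupp.single (vd i (π i)) (1:ℕ)) t)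
            (fun i _ => Nat.zero_le _) (Finset.mem_univ i0)
    have hM2t : (mσ + mσ) t = 0 := by
      rw [Finsupp.add_apply, hmσ0 t ?_]
      intro l hEq
      have h1 := congrArg (fun d : Diag n => d.1) hEq
      simp only [htdef, he l] at h1
      obtain ⟨h2, h3⟩ := Prod.ext_iff.1 h1
      exact hnc l ⟨hj.injective h2, hj.injective h3⟩
    have hvo_t : vo t (e kk) := by
      apply hcompat
      have hdt : dval n t = min ((j b : ℕ) - (j a : ℕ)) (n + (j a : ℕ) - (j b : ℕ)) := rfl
      have hde : dval n (e kk) =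
          min ((j (Fin.natAdd r kk) : ℕ) - (j (Fin.castAdd r kk) : ℕ))
              (n + (j (Fin.castAdd r kk) : ℕ) - (j (Fin.natAdd r kk) : ℕ)) := by
        rw [dval, he kk]
      rw [hdt, hde]
      exact hdist
    have := hv0min t hvo_t
    omega
  -- now the leading monomial of p
  letI : DecidableRel (TermLT vo) := Classical.decRel _
  haveI hSTO : IsStrictTotalOrder ((Diag n) →₀ ℕ) (TermLT vo) := termlt_STO vo
  letI : LinearOrder ((Diag n) →₀ ℕ) := linearOrderOfSTO (TermLT vo)
  have hp0 : p ≠ 0 := by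
    intro h0
    rw [h0] at hp
    have : (A.submatrix j j).det = 0 := by
      rw [← hp]; ring
    rw [this, coeff_zero] at hdetcoeff
    exact hdetcoeff rfl
  have hsupne : p.support.Nonempty := Finset.nonempty_iff_ne_empty.2 (fun h => hp0 (MvPolynomial.support_eq_empty.1 h))
  set mp : (Diag n) →₀ ℕ := p.support.max' hsupne with hmpdef
  have hmpmem : mp ∈ p.support := p.support.max'_mem hsupne
  have hmple : ∀ m ∈ p.support, m = mp ∨ TermLT vo m mp := by
    intro m hm
    exact (show m = mp ∨ TermLT vo m mp from p.support.le_max' m hm)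
  have hpp : p * p = (A.submatrix j j).det := by rw [← hp]; ring
  have hppcoeff : coeff (mp + mp) (p * p) ≠ 0 := by
    rw [coeff_mul_of_max vo hmple hmple]
    exact mul_ne_zero (mem_support_iff.1 hmpmem) (mem_support_iff.1 hmpmem)
  have hppmax := support_mul_of_max vo hmple hmple
  -- compare the two maxima
  have h1 : mp + mp = mσ + mσ ∨ TermLT vo (mp + mp) (mσ + mσ) := by
    apply hdetmax
    rw [← hpp]
    exact mem_support_iff.2 hppcoeff
  have h2 : mσ + mσ = mp + mp ∨ TermLT vo (mσ + mσ) (mp + mp) := by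
    apply hppmax
    rw [hpp]
    exact mem_support_iff.2 hdetcoeff
  have hmpσ : mp = mσ := by
    have hEq : mp + mp = mσ + mσ := by
      rcases h1 with h1 | h1
      · exact h1
      · rcases h2 with h2 | h2
        · exact h2.symm
        · exact absurd (hSTO.trans _ _ _ h1 h2) (hSTO.irrefl _)
    have := fun v => congrArg (fun m : (Diag n) →₀ ℕ => m v) hEq
    refine Finsupp.ext (fun v => ?_)
    have hv := this v
    simp only [Finsupp.add_apply] at hv
    omega
  constructor
  · rw [← hmpσ]; exact hmpmem
  · intro m hm hne
    rcases hmple m hm with h | h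
    · exact absurd (h.trans hmpσ) hne
    · rw [← hmpσ]; exact h
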